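/- Let (L, g₀) be a Riemannian manifold, I ⊂ ℝ an open interval, and g = -dt² + g_t a Lorentzian metric on I × L making the canonical foliations orthogonal, where g_t is a smooth family of metrics on L. Suppose E = ∂t is orthogonally conformal with L_E g(X,Y) = 2a·g(X,Y) for X,Y ⊥ E, where a = div E/(n-1). Then g_t = f(t,q)²·g₀ with f(t,q) = exp(∫₀ᵗ div E(s,q)/(n-1) ds), i.e., g is a twisted product. -/

import Mathlib

/-- Lemma 2.3 (first part): on `I × L` with metric `g = -dt² + g_t` (the canonical
foliations orthogonal, `E = ∂t` unit timelike), if `E` is orthogonally conformal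
with `(L_E g)(X,Y) = 2a·g(X,Y)` for `X,Y ⊥ E`, where `a = div E/(n-1)` — i.e. the
family of metrics `G t q` on the leaves satisfies `∂_t (G t q v w) = 2a(t,q)·G t q v w`
— then `G t q = f(t,q)²·G 0 q` with `f(t,q) = exp(∫₀ᵗ div E(s,q)/(n-1) ds)`:
the metric is the twisted product `-dt² + f(t,q)²g₀`. -/
theorem stmt_18 {L : Type*} {V : Type*} [AddCommGroup V] [Module ℝ V]
    (α β : ℝ) (hI : (0 : ℝ) ∈ Set.Ioo α β)
    (n : ℕ) (hn : 2 ≤ n)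
    (G : ℝ → L → V →ₗ[ℝ] V →ₗ[ℝ] ℝ)
    (Gsymm : ∀ t q v w, G t q v w = G t q w v)
    (divE : ℝ → L → ℝ)
    (hcont : ∀ q, ContinuousOn (fun t => divE t q) (Set.Ioo α β))
    (hconf : ∀ q (v w : V), ∀ t ∈ Set.Ioo α β,
      HasDerivAt (fun s => G s q v w)
        (2 * (divE t q / ((n : ℝ) - 1)) * G t q v w) t) :
    ∀ t ∈ Set.Ioo α β, ∀ q (v w : V),
      G t q v w
        = (Real.exp (∫ s in (0 : ℝ)..t, divE s q / ((n : ℝ) - 1))) ^ 2 * G 0 q v w := by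
  intro t ht q v w
  set a : ℝ → ℝ := fun s => divE s q / ((n : ℝ) - 1) with ha
  have hacont : ContinuousOn a (Set.Ioo α β) := (hcont q).div_const _
  set F : ℝ → ℝ := fun u => ∫ s in (0 : ℝ)..u, a s with hF
  -- derivative of F on Ioo α β
  have hFd : ∀ u ∈ Set.Ioo α β, HasDerivAt F (a u) u := by
    intro u hu
    have hsub : Set.uIcc (0 : ℝ) u ⊆ Set.Ioo α β := by
      exact Set.ordConnected_Ioo.uIcc_subset hI hu
    have hint : IntervalIntegrable a MeasureTheory.volume 0 u :=
      (hacont.mono hsub).intervalIntegrable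
    have hmeas : StronglyMeasurableAtFilter a (nhds u) MeasureTheory.volume :=
      hacont.stronglyMeasurableAtFilter isOpen_Ioo u hu
    exact intervalIntegral.integral_hasDerivAt_right hint hmeas
      (hacont.continuousAt (isOpen_Ioo.mem_nhds hu))
  set h : ℝ → ℝ := fun s => G s q v w with hh
  set φ : ℝ → ℝ := fun s => Real.exp (-2 * F s) * h s with hφ
  have hφd : ∀ u ∈ Set.Ioo α β, HasDerivAt φ 0 u := by
    intro u hu
    have h1 : HasDerivAt (fun s => Real.exp (-2 * F s))
        (Real.exp (-2 * F u) * (-2 * a u)) u := (((hFd u hu).const_mul (-2)).exp)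
    have h2 := hconf q v w u hu
    have := h1.fun_mul h2
    refine this.congr_deriv ?_
    simp only [ha]
    ring
  -- φ is constant on Ioo α β
  have hconst : φ t = φ 0 := by
    have hdiff : DifferentiableOn ℝ φ (Set.Ioo α β) := fun x hx =>
      ((hφd x hx).differentiableAt).differentiableWithinAt
    apply (convex_Ioo α β).is_const_of_fderivWithin_eq_zero hdiff _ ht hI
    intro x hx
    have : fderiv ℝ φ x = 0 := by
      have := (hφd x hx).hasFDerivAt.fderiv
      rw [this]
      ext y
      simp
    rw [fderivWithin_of_isOpen isOpen_Ioo hx, this]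
  have hF0 : F 0 = 0 := intervalIntegral.integral_same
  have hexp : Real.exp (-2 * F t) ≠ 0 := Real.exp_ne_zero _
  have key : h t = Real.exp (2 * F t) * h 0 := by
    have : Real.exp (-2 * F t) * h t = h 0 := by
      have := hconst
      simp only [hφ, hF0] at this
      simpa using this
    have := congrArg (fun x => Real.exp (2 * F t) * x) this
    rw [← this]
    rw [← mul_assoc, ← Real.exp_add]
    ring_nf
    simp
  have hsq : Real.exp (F t) ^ 2 = Real.exp (2 * F t) := by
    rw [← Real.exp_nat_mul]
    norm_num
  calc G t q v w = h t := rfl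
    _ = Real.exp (2 * F t) * h 0 := key
    _ = Real.exp (F t) ^ 2 * G 0 q v w := by rw [hsq]
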